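/- Let γ > 1 and define n_0 ≥ 2 and n_{k+1} = ⌈n_k^γ⌉ for k ≥ 0. Suppose (a_k)_{k≥1} is a sequence of positive reals with log a_k = (1 - β + r_k)·log n_k where r_k → 0 as k → ∞ and β ∈ ℝ. Then Σ_{i=1}^k log a_i = (γ(1-β)/(γ-1) + o(1))·log n_k as k → ∞; equivalently, ∏_{i=1}^k a_i = n_k^{γ(1-β)/(γ-1) + o(1)}. -/

import Mathlib

open Filter

lemma sumIcc_pow {q : ℝ} (k : ℕ) :
    ∑ i ∈ Finset.Icc 1 k, q ^ (k - i) = ∑ j ∈ Finset.range k, q ^ j := by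
  induction k with
  | zero => simp
  | succ k ih =>
    rw [Finset.sum_Icc_succ_top (by omega : 1 ≤ k + 1), geom_sum_succ, ← ih,
      Finset.mul_sum]
    have h : ∀ i ∈ Finset.Icc 1 k, q ^ (k + 1 - i) = q * q ^ (k - i) := by
      intro i hi
      simp only [Finset.mem_Icc] at hi
      rw [show k + 1 - i = (k - i) + 1 by omega, pow_succ]
      ring
    rw [Finset.sum_congr rfl h]
    simp

lemma geom_conv {q : ℝ} (hq0 : 0 ≤ q) (hq1 : q < 1) (u : ℕ → ℝ) (hu0 : ∀ i, 0 ≤ u i)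
    (hu : Tendsto u atTop (nhds 0)) :
    Tendsto (fun k => ∑ i ∈ Finset.Icc 1 k, u i * q ^ (k - i)) atTop (nhds 0) := by
  have hq1' : 0 < 1 - q := by linarith
  obtain ⟨M, hM⟩ : ∃ M, ∀ i, u i ≤ M := by
    obtain ⟨M, hM⟩ := hu.bddAbove_range
    exact ⟨M, fun i => hM ⟨i, rfl⟩⟩
  have hM0 : 0 ≤ M := (hu0 0).trans (hM 0)
  rw [Metric.tendsto_atTop]
  intro ε hε
  -- choose N with u i ≤ ε' for i ≥ N
  have hε' : 0 < ε * (1 - q) / 2 := by positivity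
  obtain ⟨N, hN⟩ := (Metric.tendsto_atTop.mp hu) (ε * (1 - q) / 2) hε'
  have hN' : ∀ i, N ≤ i → u i ≤ ε * (1 - q) / 2 := by
    intro i hi
    have := hN i hi
    rw [Real.dist_eq, sub_zero, abs_of_nonneg (hu0 i)] at this
    linarith
  -- choose K so that head part is small
  have htail : Tendsto (fun k : ℕ => (N : ℝ) * M * q ^ (k - N)) atTop (nhds 0) := by
    have := (tendsto_pow_atTop_nhds_zero_of_lt_one hq0 hq1).comp (tendsto_sub_atTop_nat N)
    simpa using (this.const_mul ((N : ℝ) * M))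
  obtain ⟨K, hK⟩ := (Metric.tendsto_atTop.mp htail) (ε / 4) (by positivity)
  refine ⟨max (N + 1) K, fun k hk => ?_⟩
  have hkN : N + 1 ≤ k := le_trans (le_max_left _ _) hk
  have hkK : K ≤ k := le_trans (le_max_right _ _) hk
  rw [Real.dist_eq, sub_zero]
  have hsum0 : 0 ≤ ∑ i ∈ Finset.Icc 1 k, u i * q ^ (k - i) :=
    Finset.sum_nonneg fun i _ => mul_nonneg (hu0 i) (pow_nonneg hq0 _)
  rw [abs_of_nonneg hsum0]
  -- split sum
  have hsplit : Finset.Icc 1 k = Finset.Icc 1 N ∪ Finset.Icc (N + 1) k := by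
    ext x
    simp only [Finset.mem_Icc, Finset.mem_union]
    omega
  have hdisj : Disjoint (Finset.Icc 1 N) (Finset.Icc (N + 1) k) := by
    apply Finset.disjoint_left.mpr
    intro x hx hx'
    simp only [Finset.mem_Icc] at hx hx'
    omega
  rw [hsplit, Finset.sum_union hdisj]
  have h1 : ∑ i ∈ Finset.Icc 1 N, u i * q ^ (k - i) ≤ (N : ℝ) * M * q ^ (k - N) := by
    calc ∑ i ∈ Finset.Icc 1 N, u i * q ^ (k - i)
        ≤ ∑ i ∈ Finset.Icc 1 N, M * q ^ (k - N) := by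
          apply Finset.sum_le_sum
          intro i hi
          simp only [Finset.mem_Icc] at hi
          exact mul_le_mul (hM i) (pow_le_pow_of_le_one hq0 hq1.le (by omega))
            (pow_nonneg hq0 _) hM0
      _ = (Finset.Icc 1 N).card * (M * q ^ (k - N)) := by rw [Finset.sum_const, nsmul_eq_mul]
      _ ≤ (N : ℝ) * M * q ^ (k - N) := by
          rw [Nat.card_Icc]
          have : ((N + 1 - 1 : ℕ) : ℝ) ≤ (N : ℝ) := by simp
          nlinarith [pow_nonneg hq0 (k - N), mul_nonneg hM0 (pow_nonneg hq0 (k - N))]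
  have h1' : (N : ℝ) * M * q ^ (k - N) ≤ ε / 4 := by
    have := hK k hkK
    rw [Real.dist_eq, sub_zero] at this
    exact (le_abs_self _).trans this.le
  have h2 : ∑ i ∈ Finset.Icc (N + 1) k, u i * q ^ (k - i) ≤ ε / 2 := by
    calc ∑ i ∈ Finset.Icc (N + 1) k, u i * q ^ (k - i)
        ≤ ∑ i ∈ Finset.Icc (N + 1) k, ε * (1 - q) / 2 * q ^ (k - i) := by
          apply Finset.sum_le_sum
          intro i hi
          simp only [Finset.mem_Icc] at hi
          exact mul_le_mul_of_nonneg_right (hN' i (by omega)) (pow_nonneg hq0 _)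
      _ = ε * (1 - q) / 2 * ∑ i ∈ Finset.Icc (N + 1) k, q ^ (k - i) := by
          rw [Finset.mul_sum]
      _ ≤ ε * (1 - q) / 2 * (1 / (1 - q)) := by
          apply mul_le_mul_of_nonneg_left _ (by positivity)
          calc ∑ i ∈ Finset.Icc (N + 1) k, q ^ (k - i)
              ≤ ∑ i ∈ Finset.Icc 1 k, q ^ (k - i) := by
                apply Finset.sum_le_sum_of_subset_of_nonneg
                · apply Finset.Icc_subset_Icc (by omega) le_rfl
                · intro i _ _; exact pow_nonneg hq0 _
            _ = ∑ j ∈ Finset.range k, q ^ j := sumIcc_pow k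
            _ ≤ 1 / (1 - q) := by
                rw [geom_sum_eq (by linarith : q ≠ 1)]
                have h : (q ^ k - 1) / (q - 1) = (1 - q ^ k) / (1 - q) := by
                  rw [div_eq_div_iff (by linarith) (by linarith)]; ring
                rw [h]
                gcongr
                nlinarith [pow_nonneg hq0 k]
      _ = ε / 2 := by field_simp
  linarith

theorem stmt_14 (γ β : ℝ) (hγ : 1 < γ)
    (n : ℕ → ℕ) (hn0 : 2 ≤ n 0)
    (hnrec : ∀ k : ℕ, n (k + 1) = ⌈(n k : ℝ) ^ γ⌉₊)
    (a : ℕ → ℝ) (ha : ∀ k, 1 ≤ k → 0 < a k)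
    (r : ℕ → ℝ) (hr : Tendsto r atTop (nhds 0))
    (hlog : ∀ k : ℕ, 1 ≤ k → Real.log (a k) = (1 - β + r k) * Real.log (n k)) :
    ∃ e : ℕ → ℝ, Tendsto e atTop (nhds 0) ∧
      ∀ k : ℕ, 1 ≤ k →
        ∑ i ∈ Finset.Icc 1 k, Real.log (a i) =
          (γ * (1 - β) / (γ - 1) + e k) * Real.log (n k) := by
  have hγ0 : 0 < γ := by linarith
  set q : ℝ := γ⁻¹ with hqdef
  have hq0 : 0 < q := inv_pos.mpr hγ0
  have hq1 : q < 1 := inv_lt_one_of_one_lt₀ hγ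
  have hq1' : 0 < 1 - q := by linarith
  have hqγ : ∀ j : ℕ, q ^ j * γ ^ j = 1 := by
    intro j
    rw [← mul_pow, inv_mul_cancel₀ (by positivity), one_pow]
  set c : ℝ := Real.log 2 / (γ - 1) with hcdef
  have hlog2 : (0:ℝ) < Real.log 2 := Real.log_pos one_lt_two
  have hc0 : 0 ≤ c := div_nonneg hlog2.le (by linarith)
  set L : ℕ → ℝ := fun k => Real.log (n k) with hLdef
  set C : ℝ := γ * (1 - β) / (γ - 1) with hCdef
  have hCq : C = (1 - β) / (1 - q) := by
    rw [hCdef, div_eq_div_iff ((by linarith : (0:ℝ) < γ - 1).ne') hq1'.ne']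
    rw [hqdef]
    field_simp
  -- basic facts about n
  have hn2 : ∀ k, 2 ≤ n k := by
    intro k
    induction k with
    | zero => exact hn0
    | succ k ih =>
      rw [hnrec]
      have h1 : (2:ℝ) ≤ (n k : ℝ) := by exact_mod_cast ih
      have h2 : (n k : ℝ) ≤ (n k : ℝ) ^ γ := by
        calc (n k:ℝ) = (n k:ℝ) ^ (1:ℝ) := (Real.rpow_one _).symm
        _ ≤ _ := Real.rpow_le_rpow_of_exponent_le (by linarith) hγ.le
      have h3 := Nat.le_ceil ((n k : ℝ) ^ γ)
      have : (2:ℝ) ≤ (⌈(n k:ℝ) ^ γ⌉₊ : ℝ) := by linarith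
      exact_mod_cast this
  have hnposR : ∀ k, (0:ℝ) < n k := by
    intro k
    have := hn2 k
    positivity
  have hL2 : ∀ k, Real.log 2 ≤ L k := by
    intro k
    exact Real.log_le_log (by norm_num) (by exact_mod_cast hn2 k)
  have hLpos : ∀ k, 0 < L k := fun k => lt_of_lt_of_le hlog2 (hL2 k)
  have hL3 : ∀ k, γ * L k ≤ L (k + 1) := by
    intro k
    have h1 : ((n k : ℝ)) ^ γ ≤ (n (k+1) : ℝ) := by
      rw [hnrec]; exact Nat.le_ceil _
    have h2 : Real.log ((n k : ℝ) ^ γ) ≤ L (k+1) :=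
      Real.log_le_log (Real.rpow_pos_of_pos (hnposR k) γ) h1
    rwa [Real.log_rpow (hnposR k)] at h2
  have hL4 : ∀ k, L (k + 1) ≤ γ * L k + Real.log 2 := by
    intro k
    have h1 : (n (k+1) : ℝ) ≤ (n k:ℝ) ^ γ + 1 := by
      rw [hnrec]
      exact (Nat.ceil_lt_add_one (Real.rpow_nonneg (hnposR k).le γ)).le
    have hpow1 : (1:ℝ) ≤ (n k:ℝ) ^ γ := by
      have : (1:ℝ) ≤ (n k : ℝ) := by
        have := hn2 k; exact_mod_cast this.trans' (by norm_num)
      calc (1:ℝ) = 1 ^ γ := (Real.one_rpow γ).symm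
      _ ≤ (n k:ℝ) ^ γ := Real.rpow_le_rpow (by norm_num) this (by positivity)
    have h2 : (n (k+1) : ℝ) ≤ 2 * (n k:ℝ) ^ γ := by linarith
    have h3 : L (k+1) ≤ Real.log (2 * (n k:ℝ) ^ γ) := Real.log_le_log (hnposR _) h2
    rw [Real.log_mul (by norm_num) (by positivity), Real.log_rpow (hnposR k)] at h3
    simp only [hLdef] at h3 ⊢
    linarith
  -- iterated bounds
  have hUp : ∀ i j : ℕ, L i * γ ^ j ≤ L (i + j) := by
    intro i j
    induction j with
    | zero => simp
    | succ j ih =>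
      have h1 : L i * γ ^ (j + 1) = (L i * γ ^ j) * γ := by ring
      rw [h1]
      calc (L i * γ ^ j) * γ ≤ L (i + j) * γ := by nlinarith
      _ = γ * L (i + j) := by ring
      _ ≤ L (i + j + 1) := hL3 _
  have hLow : ∀ i j : ℕ, L (i + j) + c ≤ (L i + c) * γ ^ j := by
    intro i j
    induction j with
    | zero => simp
    | succ j ih =>
      have hγc : γ * c = c + Real.log 2 := by
        rw [hcdef]
        field_simp [show γ - 1 ≠ 0 by intro h; linarith [h]]
        ring
      show L (i + j + 1) + c ≤ (L i + c) * γ ^ (j + 1)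
      calc L (i + j + 1) + c ≤ γ * L (i + j) + Real.log 2 + c := by
            have := hL4 (i + j); linarith [this]
      _ = γ * (L (i + j) + c) := by rw [mul_add, hγc]; ring
      _ ≤ γ * ((L i + c) * γ ^ j) := by nlinarith [hLpos (i+j)]
      _ = (L i + c) * γ ^ (j + 1) := by ring
  have hLe : ∀ i k : ℕ, i ≤ k → L i ≤ L k * q ^ (k - i) := by
    intro i k hik
    have h1 := hUp i (k - i)
    rw [Nat.add_sub_cancel' hik] at h1
    have h2 : L i * γ ^ (k - i) * q ^ (k - i) ≤ L k * q ^ (k - i) :=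
      mul_le_mul_of_nonneg_right h1 (by positivity)
    calc L i = L i * (γ ^ (k-i) * q ^ (k-i)) := by
          rw [mul_comm (γ ^ (k-i)), hqγ, mul_one]
    _ = L i * γ ^ (k - i) * q ^ (k - i) := by ring
    _ ≤ L k * q ^ (k - i) := h2
  have hGe : ∀ i k : ℕ, i ≤ k → L k * q ^ (k - i) - c ≤ L i := by
    intro i k hik
    have h1 := hLow i (k - i)
    rw [Nat.add_sub_cancel' hik] at h1
    have h2 : (L k + c) * q ^ (k - i) ≤ (L i + c) * γ ^ (k - i) * q ^ (k - i) :=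
      mul_le_mul_of_nonneg_right h1 (by positivity)
    have h3 : (L i + c) * γ ^ (k - i) * q ^ (k - i) = L i + c := by
      rw [mul_assoc, mul_comm (γ ^ (k-i)), hqγ, mul_one]
    have h4 : (0:ℝ) ≤ c * q ^ (k - i) := by positivity
    nlinarith [h2, h3]
  -- geometric sum facts
  have hGsum : ∀ k : ℕ, ∑ j ∈ Finset.range k, q ^ j = (1 - q ^ k) / (1 - q) := by
    intro k
    rw [geom_sum_eq (by linarith : q ≠ 1)]
    rw [div_eq_div_iff (by linarith) (by linarith)]
    ring
  -- sum bounds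
  have sumUp : ∀ k : ℕ, ∑ i ∈ Finset.Icc 1 k, L i ≤ L k * ((1 - q ^ k) / (1 - q)) := by
    intro k
    calc ∑ i ∈ Finset.Icc 1 k, L i ≤ ∑ i ∈ Finset.Icc 1 k, L k * q ^ (k - i) := by
          apply Finset.sum_le_sum
          intro i hi
          simp only [Finset.mem_Icc] at hi
          exact hLe i k hi.2
    _ = L k * ∑ i ∈ Finset.Icc 1 k, q ^ (k - i) := by rw [Finset.mul_sum]
    _ = L k * ((1 - q ^ k) / (1 - q)) := by rw [sumIcc_pow, hGsum]
  have sumLow : ∀ k : ℕ, L k * ((1 - q ^ k) / (1 - q)) - k * c ≤ ∑ i ∈ Finset.Icc 1 k, L i := by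
    intro k
    have h1 : ∑ i ∈ Finset.Icc 1 k, (L k * q ^ (k - i) - c) ≤ ∑ i ∈ Finset.Icc 1 k, L i := by
      apply Finset.sum_le_sum
      intro i hi
      simp only [Finset.mem_Icc] at hi
      exact hGe i k hi.2
    calc L k * ((1 - q ^ k) / (1 - q)) - k * c
        = L k * ∑ i ∈ Finset.Icc 1 k, q ^ (k - i) - (Finset.Icc 1 k).card * c := by
          rw [sumIcc_pow, hGsum, Nat.card_Icc]
          simp
    _ = ∑ i ∈ Finset.Icc 1 k, (L k * q ^ (k - i) - c) := by
          rw [Finset.sum_sub_distrib, ← Finset.mul_sum, Finset.sum_const, nsmul_eq_mul]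
    _ ≤ _ := h1
  -- the error sequence
  refine ⟨fun k => (∑ i ∈ Finset.Icc 1 k, Real.log (a i)) / L k - C, ?_, ?_⟩
  · -- tendsto
    set B : ℕ → ℝ := fun k =>
      |1 - β| * (q ^ k / (1 - q) + (k : ℝ) * c / L k) +
        ∑ i ∈ Finset.Icc 1 k, |r i| * q ^ (k - i) with hBdef
    have hBtendsto : Tendsto B atTop (nhds 0) := by
      have t1 : Tendsto (fun k : ℕ => q ^ k / (1 - q)) atTop (nhds 0) := by
        have := (tendsto_pow_atTop_nhds_zero_of_lt_one hq0.le hq1).div_const (1 - q)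
        simpa using this
      have t2 : Tendsto (fun k : ℕ => (k : ℝ) * c / L k) atTop (nhds 0) := by
        have hb2 : Tendsto (fun k : ℕ => (c / Real.log 2) * ((k : ℝ) * q ^ k)) atTop (nhds 0) := by
          have := (tendsto_self_mul_const_pow_of_lt_one hq0.le hq1).const_mul (c / Real.log 2)
          simpa using this
        have h0 : ∀ k : ℕ, (0:ℝ) ≤ (k : ℝ) * c / L k := fun k =>
          div_nonneg (mul_nonneg (Nat.cast_nonneg k) hc0) (hLpos k).le
        have hbound : ∀ k : ℕ, (k : ℝ) * c / L k ≤ (c / Real.log 2) * ((k : ℝ) * q ^ k) := by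
          intro k
          rw [div_le_iff₀ (hLpos k)]
          have hLk : Real.log 2 * γ ^ k ≤ L k := by
            have h1 := hUp 0 k
            simp only [zero_add] at h1
            nlinarith [hL2 0, pow_pos hγ0 k]
          have hnn : (0:ℝ) ≤ c / Real.log 2 * ((k : ℝ) * q ^ k) :=
            mul_nonneg (div_nonneg hc0 hlog2.le)
              (mul_nonneg (Nat.cast_nonneg k) (by positivity))
          calc (k : ℝ) * c
              = c / Real.log 2 * ((k : ℝ) * q ^ k) * (Real.log 2 * γ ^ k) := by
                rw [show c / Real.log 2 * ((k : ℝ) * q ^ k) * (Real.log 2 * γ ^ k)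
                    = (k : ℝ) * c * (q ^ k * γ ^ k) * (Real.log 2 / Real.log 2) by ring,
                  hqγ, div_self hlog2.ne']
                ring
            _ ≤ c / Real.log 2 * ((k : ℝ) * q ^ k) * L k :=
                mul_le_mul_of_nonneg_left hLk hnn
        exact tendsto_of_tendsto_of_tendsto_of_le_of_le tendsto_const_nhds hb2 h0 hbound
      have t3 : Tendsto (fun k => ∑ i ∈ Finset.Icc 1 k, |r i| * q ^ (k - i)) atTop (nhds 0) :=
        geom_conv hq0.le hq1 (fun i => |r i|) (fun i => abs_nonneg _) (by
          have := hr.abs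
          simpa using this)
      have := ((t1.add t2).const_mul |1 - β|).add t3
      simpa using this
    refine squeeze_zero_norm' ?_ hBtendsto
    rw [eventually_atTop]
    refine ⟨1, fun k hk => ?_⟩
    -- rewrite the sum
    have hS : ∑ i ∈ Finset.Icc 1 k, Real.log (a i)
        = (1 - β) * (∑ i ∈ Finset.Icc 1 k, L i) + ∑ i ∈ Finset.Icc 1 k, r i * L i := by
      rw [Finset.mul_sum, ← Finset.sum_add_distrib]
      apply Finset.sum_congr rfl
      intro i hi
      simp only [Finset.mem_Icc] at hi
      rw [hlog i hi.1]
      ring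
    rw [Real.norm_eq_abs]
    have hLk := hLpos k
    have habs : |(∑ i ∈ Finset.Icc 1 k, Real.log (a i)) / L k - C|
        ≤ |1 - β| * |(∑ i ∈ Finset.Icc 1 k, L i) / L k - 1 / (1 - q)|
          + |∑ i ∈ Finset.Icc 1 k, r i * L i| / L k := by
      rw [hS, hCq]
      have : ((1 - β) * (∑ i ∈ Finset.Icc 1 k, L i) + ∑ i ∈ Finset.Icc 1 k, r i * L i) / L k
          - (1 - β) / (1 - q)
          = (1 - β) * ((∑ i ∈ Finset.Icc 1 k, L i) / L k - 1 / (1 - q))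
            + (∑ i ∈ Finset.Icc 1 k, r i * L i) / L k := by
        field_simp
        ring
      rw [this]
      calc _ ≤ |(1 - β) * ((∑ i ∈ Finset.Icc 1 k, L i) / L k - 1 / (1 - q))|
            + |(∑ i ∈ Finset.Icc 1 k, r i * L i) / L k| := abs_add_le _ _
      _ = _ := by rw [abs_mul, abs_div, abs_of_pos hLk]
    have hup' : (∑ i ∈ Finset.Icc 1 k, L i) / L k ≤ (1 - q ^ k) / (1 - q) := by
      rw [div_le_iff₀ hLk]
      calc ∑ i ∈ Finset.Icc 1 k, L i ≤ L k * ((1 - q ^ k) / (1 - q)) := sumUp k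
      _ = (1 - q ^ k) / (1 - q) * L k := by ring
    have hlow' : (1 - q ^ k) / (1 - q) - (k : ℝ) * c / L k
        ≤ (∑ i ∈ Finset.Icc 1 k, L i) / L k := by
      rw [le_div_iff₀ hLk]
      have hid : ((1 - q ^ k) / (1 - q) - (k : ℝ) * c / L k) * L k
          = L k * ((1 - q ^ k) / (1 - q)) - (k : ℝ) * c := by
        field_simp
      rw [hid]
      exact sumLow k
    have hqk0 : (0:ℝ) ≤ q ^ k / (1 - q) := by positivity
    have hkc0 : (0:ℝ) ≤ (k : ℝ) * c / L k := by positivity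
    have hid2 : (1 - q ^ k) / (1 - q) = 1 / (1 - q) - q ^ k / (1 - q) := by ring
    have hA : |(∑ i ∈ Finset.Icc 1 k, L i) / L k - 1 / (1 - q)|
        ≤ q ^ k / (1 - q) + (k : ℝ) * c / L k := by
      rw [abs_le]
      constructor
      · linarith
      · linarith
    have hB2 : |∑ i ∈ Finset.Icc 1 k, r i * L i|
        ≤ (∑ i ∈ Finset.Icc 1 k, |r i| * q ^ (k - i)) * L k := by
      calc |∑ i ∈ Finset.Icc 1 k, r i * L i|
          ≤ ∑ i ∈ Finset.Icc 1 k, |r i * L i| := Finset.abs_sum_le_sum_abs _ _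
      _ = ∑ i ∈ Finset.Icc 1 k, |r i| * L i := by
          apply Finset.sum_congr rfl
          intro i _
          rw [abs_mul, abs_of_pos (hLpos i)]
      _ ≤ ∑ i ∈ Finset.Icc 1 k, |r i| * (L k * q ^ (k - i)) := by
          apply Finset.sum_le_sum
          intro i hi
          simp only [Finset.mem_Icc] at hi
          exact mul_le_mul_of_nonneg_left (hLe i k hi.2) (abs_nonneg _)
      _ = (∑ i ∈ Finset.Icc 1 k, |r i| * q ^ (k - i)) * L k := by
          rw [Finset.sum_mul]
          apply Finset.sum_congr rfl
          intro i _
          ring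
    have hB3 : |∑ i ∈ Finset.Icc 1 k, r i * L i| / L k
        ≤ ∑ i ∈ Finset.Icc 1 k, |r i| * q ^ (k - i) := by
      rw [div_le_iff₀ hLk]
      exact hB2
    have hfinal := mul_le_mul_of_nonneg_left hA (abs_nonneg (1 - β))
    rw [hBdef]
    linarith
  · -- the identity
    intro k hk
    have hLk := hLpos k
    field_simp
    ring
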